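/- The ring C(X) of continuous real-valued functions on a completely regular Hausdorff space X is a PW-ring if and only if X is a WCF-space. -/
import Mathlib

open Set

/-- `C(X)` is a PW-ring iff `X` is a WCF-space. -/
theorem stmt15 {X : Type*} [TopologicalSpace X] [T2Space X] [CompletelyRegularSpace X] :
    (∀ f g : C(X, ℝ), f * g = 0 →
      ∃ h₁ h₂ : C(X, ℝ), h₁ * f = 0 ∧ h₂ * g = 0 ∧
        (∀ k : C(X, ℝ), (h₁ + h₂) * k = 0 → k = 0)) ↔
    (∀ f g : C(X, ℝ), (f ⁻¹' {0})ᶜ ∩ (g ⁻¹' {0})ᶜ = ∅ →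
      ∃ h₁ h₂ : C(X, ℝ), (f ⁻¹' {0})ᶜ ⊆ h₁ ⁻¹' {0} ∧ (g ⁻¹' {0})ᶜ ⊆ h₂ ⁻¹' {0} ∧
        interior (h₁ ⁻¹' {0}) ∩ interior (h₂ ⁻¹' {0}) = ∅) := by
  constructor
  · intro PW f g hdisj
    have hfg : f * g = 0 := by
      ext x
      simp only [ContinuousMap.mul_apply, ContinuousMap.zero_apply]
      by_cases hf : f x = 0
      · simp [hf]
      · have hg : g x = 0 := by
          by_contra hg
          have : x ∈ (f ⁻¹' {0})ᶜ ∩ (g ⁻¹' {0})ᶜ := ⟨by simpa using hf, by simpa using hg⟩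
          simp [hdisj] at this
        simp [hg]
    obtain ⟨h₁, h₂, e1, e2, hreg⟩ := PW f g hfg
    have zero_of_mul : ∀ (h f : C(X, ℝ)), h * f = 0 → (f ⁻¹' {0})ᶜ ⊆ h ⁻¹' {0} := by
      intro h f he x hx
      have hfx : f x ≠ 0 := by simpa using hx
      have := congrArg (fun u : C(X, ℝ) => u x) he
      simp only [ContinuousMap.mul_apply, ContinuousMap.zero_apply] at this
      rcases mul_eq_zero.mp this with h' | h'
      · simpa using h'
      · exact absurd h' hfx
    refine ⟨h₁, h₂, zero_of_mul h₁ f e1, zero_of_mul h₂ g e2, ?_⟩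
    by_contra hne
    obtain ⟨x, hx⟩ := nonempty_iff_ne_empty.mpr hne
    set U := interior (h₁ ⁻¹' {0}) ∩ interior (h₂ ⁻¹' {0}) with hUdef
    have hUopen : IsOpen U := isOpen_interior.inter isOpen_interior
    obtain ⟨b, hbc, hbx, hbK⟩ := CompletelyRegularSpace.completely_regular x Uᶜ
      hUopen.isClosed_compl (by simpa using hx)
    set k : C(X, ℝ) := ⟨fun y => 1 - (b y : ℝ),
      continuous_const.sub (continuous_subtype_val.comp hbc)⟩ with hk
    have hk0 : (h₁ + h₂) * k = 0 := by
      ext y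
      simp only [ContinuousMap.mul_apply, ContinuousMap.add_apply, ContinuousMap.zero_apply]
      by_cases hy : y ∈ U
      · have h1y : h₁ y = 0 := by
          have : y ∈ h₁ ⁻¹' {0} := interior_subset hy.1
          simpa using this
        have h2y : h₂ y = 0 := by
          have : y ∈ h₂ ⁻¹' {0} := interior_subset hy.2
          simpa using this
        simp [h1y, h2y]
      · have : b y = 1 := hbK hy
        show (h₁ y + h₂ y) * (1 - (b y : ℝ)) = 0
        simp [this]
    have := hreg k hk0
    have hkx : k x = 1 - (b x : ℝ) := rfl
    rw [this] at hkx
    simp [hbx] at hkx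
  · intro WCF f g hfg
    have hdisj : (f ⁻¹' {0})ᶜ ∩ (g ⁻¹' {0})ᶜ = ∅ := by
      ext x
      simp only [mem_inter_iff, mem_compl_iff, mem_preimage, mem_singleton_iff,
        mem_empty_iff_false, iff_false, not_and, not_not]
      intro hf
      have := congrArg (fun u : C(X, ℝ) => u x) hfg
      simp only [ContinuousMap.mul_apply, ContinuousMap.zero_apply] at this
      rcases mul_eq_zero.mp this with h' | h'
      · exact absurd h' hf
      · exact h'
    obtain ⟨h₁, h₂, s1, s2, hint⟩ := WCF f g hdisj
    refine ⟨h₁ * h₁, h₂ * h₂, ?_, ?_, ?_⟩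
    · ext x
      simp only [ContinuousMap.mul_apply, ContinuousMap.zero_apply]
      by_cases hf : f x = 0
      · simp [hf]
      · have : h₁ x = 0 := s1 (by simpa using hf)
        simp [this]
    · ext x
      simp only [ContinuousMap.mul_apply, ContinuousMap.zero_apply]
      by_cases hg : g x = 0
      · simp [hg]
      · have : h₂ x = 0 := s2 (by simpa using hg)
        simp [this]
    · intro k hk0
      ext x
      simp only [ContinuousMap.zero_apply]
      by_contra hkx
      -- cozero set of k
      have hcoz : IsOpen ((k ⁻¹' {0})ᶜ) := (isClosed_singleton.preimage k.continuous).isOpen_compl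
      have hsub1 : (k ⁻¹' {0})ᶜ ⊆ h₁ ⁻¹' {0} := by
        intro y hy
        have hky : k y ≠ 0 := by simpa using hy
        have := congrArg (fun u : C(X, ℝ) => u y) hk0
        simp only [ContinuousMap.mul_apply, ContinuousMap.add_apply,
          ContinuousMap.zero_apply] at this
        rcases mul_eq_zero.mp this with h' | h'
        · have := add_eq_zero_iff_of_nonneg (mul_self_nonneg _) (mul_self_nonneg _) |>.mp h'
          have h1 : h₁ y = 0 := by
            have := this.1
            exact mul_self_eq_zero.mp this
          simpa using h1
        · exact absurd h' hky
      have hsub2 : (k ⁻¹' {0})ᶜ ⊆ h₂ ⁻¹' {0} := by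
        intro y hy
        have hky : k y ≠ 0 := by simpa using hy
        have := congrArg (fun u : C(X, ℝ) => u y) hk0
        simp only [ContinuousMap.mul_apply, ContinuousMap.add_apply,
          ContinuousMap.zero_apply] at this
        rcases mul_eq_zero.mp this with h' | h'
        · have := add_eq_zero_iff_of_nonneg (mul_self_nonneg _) (mul_self_nonneg _) |>.mp h'
          have h2 : h₂ y = 0 := mul_self_eq_zero.mp this.2
          simpa using h2
        · exact absurd h' hky
      have hxmem : x ∈ (k ⁻¹' {0})ᶜ := by simpa using hkx
      have hi1 : x ∈ interior (h₁ ⁻¹' {0}) :=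
        interior_maximal hsub1 hcoz hxmem
      have hi2 : x ∈ interior (h₂ ⁻¹' {0}) :=
        interior_maximal hsub2 hcoz hxmem
      have : x ∈ interior (h₁ ⁻¹' {0}) ∩ interior (h₂ ⁻¹' {0}) := ⟨hi1, hi2⟩
      simp [hint] at this
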